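/- Assume Σ_{n=2}^∞ Ξ(n)·aₙ ≤ (A−B)(1−γ), that Ξ(2) > 0, and that Ξ(n)/(μn) ≥ Ξ(2)/(2μ) for all n ≥ 2. Set K = 2μ(A−B)(1−γ)/Ξ(2). Then for every z ∈ 𝕌, 1 − K·|z|^{2μ−1} ≤ |F_μ′(z)| ≤ 1 + K·|z|^{2μ−1}, where F_μ′(z) = 1 − Σ_{n=2}^∞ μn·aₙ z^{μn−1} is the termwise derivative series of F_μ (which converges absolutely on 𝕌 under these hypotheses). -/

import Mathlib

set_option maxHeartbeats 1000000


open Complex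

/-- `Ξ(n) = (1−B)((μn)^k ϑₙ − (μn)^m λₙ) + (A−B)(1−γ)(μn)^m λₙ`. -/
noncomputable def Xi (μ A B γ : ℝ) (k m : ℕ) (ϑ lam : ℕ → ℝ) (n : ℕ) : ℝ :=
  (1 - B) * ((μ * n) ^ k * ϑ n - (μ * n) ^ m * lam n) +
    (A - B) * (1 - γ) * ((μ * n) ^ m * lam n)

/-- `Fneg μ a z = z − Σ_{n≥2} aₙ z^{μn}` (principal powers). -/
noncomputable def Fneg (μ : ℝ) (a : ℕ → ℝ) (z : ℂ) : ℂ :=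
  z - ∑' n : ℕ, (a (n + 2) : ℂ) * z ^ ((μ * (n + 2 : ℕ) : ℝ) : ℂ)

/-- Termwise derivative series `F_μ′(z) = 1 − Σ_{n≥2} μn·aₙ z^{μn−1}`. -/
noncomputable def Fder (μ : ℝ) (a : ℕ → ℝ) (z : ℂ) : ℂ :=
  1 - ∑' n : ℕ, ((μ * (n + 2 : ℕ) * a (n + 2) : ℝ) : ℂ) *
    z ^ ((μ * (n + 2 : ℕ) - 1 : ℝ) : ℂ)

/-- distortion theorem for the derivative, Theorem 2.4 of the paper: if
`Σ_{n≥2} Ξ(n)aₙ ≤ (A−B)(1−γ)`, `Ξ(2) > 0` and `Ξ(n)/(μn) ≥ Ξ(2)/(2μ)` for all `n ≥ 2`,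
then with `K = 2μ(A−B)(1−γ)/Ξ(2)` the termwise derivative series
`F_μ′(z) = 1 − Σ_{n≥2} μn·aₙ z^{μn−1}` converges absolutely on 𝕌 and satisfies
`1 − K|z|^{2μ−1} ≤ |F_μ′(z)| ≤ 1 + K|z|^{2μ−1}` on 𝕌. -/
theorem stmt5 (μ A B γ : ℝ) (k m : ℕ) (a ϑ lam : ℕ → ℝ)
    (hμ : 1 ≤ μ) (hkm : m ≤ k)
    (hB : -1 ≤ B) (hBA : B < A) (hA : A ≤ 1) (hB0 : B < 0)
    (hγ0 : 0 ≤ γ) (hγ1 : γ < 1)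
    (ha : ∀ n, 2 ≤ n → 0 ≤ a n)
    (hlam : ∀ n, 2 ≤ n → 0 ≤ lam n) (hϑ : ∀ n, 2 ≤ n → lam n ≤ ϑ n)
    (hsum : Summable fun n : ℕ => Xi μ A B γ k m ϑ lam (n + 2) * a (n + 2))
    (hle : (∑' n : ℕ, Xi μ A B γ k m ϑ lam (n + 2) * a (n + 2)) ≤ (A - B) * (1 - γ))
    (hXi2 : 0 < Xi μ A B γ k m ϑ lam 2)
    (hmono : ∀ n, 2 ≤ n →
      Xi μ A B γ k m ϑ lam 2 / (2 * μ) ≤ Xi μ A B γ k m ϑ lam n / (μ * n)) :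
    ∀ z : ℂ, ‖z‖ < 1 →
      (Summable fun n : ℕ =>
        ‖((μ * (n + 2 : ℕ) * a (n + 2) : ℝ) : ℂ) *
          z ^ ((μ * (n + 2 : ℕ) - 1 : ℝ) : ℂ)‖) ∧
      1 - 2 * μ * ((A - B) * (1 - γ)) / Xi μ A B γ k m ϑ lam 2 *
          ‖z‖ ^ (2 * μ - 1) ≤ ‖Fder μ a z‖ ∧
      ‖Fder μ a z‖ ≤ 1 +
        2 * μ * ((A - B) * (1 - γ)) / Xi μ A B γ k m ϑ lam 2 *
          ‖z‖ ^ (2 * μ - 1) := by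

  intro z hz
  have hμ0 : (0:ℝ) < μ := lt_of_lt_of_le one_pos hμ
  have hr0 : 0 ≤ ‖z‖ := norm_nonneg z
  set X := Xi μ A B γ k m ϑ lam 2 with hXdef
  set r := ‖z‖ ^ (2 * μ - 1) with hrdef
  have hrnn : 0 ≤ r := Real.rpow_nonneg hr0 _
  have hΞnn : ∀ n : ℕ, 0 ≤ Xi μ A B γ k m ϑ lam (n + 2) * a (n + 2) := by
    intro n
    have h1 := hmono (n + 2) (by omega)
    have hx : (0:ℝ) < μ * (n + 2 : ℕ) := by positivity
    have h2 : 0 < X / (2 * μ) := by positivity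
    have hΞ : 0 < Xi μ A B γ k m ϑ lam (n + 2) := by
      have h := mul_pos (lt_of_lt_of_le h2 h1) hx
      rwa [div_mul_cancel₀ _ (ne_of_gt hx)] at h
    exact mul_nonneg hΞ.le (ha (n + 2) (by omega))
  have key : ∀ n : ℕ,
      ‖((μ * (n + 2 : ℕ) * a (n + 2) : ℝ) : ℂ) *
        z ^ ((μ * (n + 2 : ℕ) - 1 : ℝ) : ℂ)‖ ≤
      2 * μ / X * (Xi μ A B γ k m ϑ lam (n + 2) * a (n + 2)) * r := by
    intro n
    have hann : 0 ≤ a (n + 2) := ha (n + 2) (by omega)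
    have hb : (0:ℝ) ≤ μ * (n + 2 : ℕ) * a (n + 2) := by positivity
    have habs : ‖((μ * (n + 2 : ℕ) * a (n + 2) : ℝ) : ℂ) *
        z ^ ((μ * (n + 2 : ℕ) - 1 : ℝ) : ℂ)‖
        = (μ * (n + 2 : ℕ) * a (n + 2)) * ‖z‖ ^ (μ * (n + 2 : ℕ) - 1) := by
      rw [norm_mul, Complex.norm_real, Real.norm_eq_abs, _root_.abs_of_nonneg hb, Complex.norm_cpow_real]
    rw [habs]
    have hpow : ‖z‖ ^ (μ * (n + 2 : ℕ) - 1) ≤ r := by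
      rcases eq_or_lt_of_le hr0 with h0 | h0
      · have he1 : (0:ℝ) < μ * (n + 2 : ℕ) - 1 := by
          have : (2:ℝ) ≤ (n + 2 : ℕ) := by exact_mod_cast (by omega : 2 ≤ n + 2)
          nlinarith
        have he2 : (0:ℝ) < 2 * μ - 1 := by nlinarith
        rw [hrdef, ← h0, Real.zero_rpow (ne_of_gt he1), Real.zero_rpow (ne_of_gt he2)]
      · apply Real.rpow_le_rpow_of_exponent_ge h0 hz.le
        have : (2:ℝ) ≤ (n + 2 : ℕ) := by exact_mod_cast (by omega : 2 ≤ n + 2)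
        nlinarith
    have hcoef : μ * (n + 2 : ℕ) * a (n + 2) ≤
        2 * μ / X * (Xi μ A B γ k m ϑ lam (n + 2) * a (n + 2)) := by
      have h1 := hmono (n + 2) (by omega)
      have hx : (0:ℝ) < μ * (n + 2 : ℕ) := by positivity
      rw [div_le_div_iff₀ (by positivity) hx] at h1
      have h2 : μ * (n + 2 : ℕ) * X ≤ 2 * μ * Xi μ A B γ k m ϑ lam (n + 2) := by
        nlinarith
      have h3 : μ * (n + 2 : ℕ) ≤ 2 * μ / X * Xi μ A B γ k m ϑ lam (n + 2) := by
        rw [div_mul_eq_mul_div, le_div_iff₀ hXi2]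
        linarith
      calc μ * (n + 2 : ℕ) * a (n + 2)
          ≤ (2 * μ / X * Xi μ A B γ k m ϑ lam (n + 2)) * a (n + 2) :=
            mul_le_mul_of_nonneg_right h3 hann
        _ = 2 * μ / X * (Xi μ A B γ k m ϑ lam (n + 2) * a (n + 2)) := by ring
    have hcnn : 0 ≤ 2 * μ / X * (Xi μ A B γ k m ϑ lam (n + 2) * a (n + 2)) := by
      have := hΞnn n; positivity
    calc μ * (n + 2 : ℕ) * a (n + 2) * ‖z‖ ^ (μ * (n + 2 : ℕ) - 1)
        ≤ 2 * μ / X * (Xi μ A B γ k m ϑ lam (n + 2) * a (n + 2)) *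
            ‖z‖ ^ (μ * (n + 2 : ℕ) - 1) := by
          exact mul_le_mul_of_nonneg_right hcoef (Real.rpow_nonneg hr0 _)
      _ ≤ 2 * μ / X * (Xi μ A B γ k m ϑ lam (n + 2) * a (n + 2)) * r :=
          mul_le_mul_of_nonneg_left hpow hcnn
  have hsb : Summable fun n : ℕ =>
      2 * μ / X * (Xi μ A B γ k m ϑ lam (n + 2) * a (n + 2)) * r :=
    (hsum.mul_left (2 * μ / X)).mul_right r
  have hsummable : Summable fun n : ℕ =>
      ‖((μ * (n + 2 : ℕ) * a (n + 2) : ℝ) : ℂ) *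
        z ^ ((μ * (n + 2 : ℕ) - 1 : ℝ) : ℂ)‖ :=
    Summable.of_nonneg_of_le (fun n => norm_nonneg _) key hsb
  refine ⟨hsummable, ?_⟩
  set S := ∑' n : ℕ, ((μ * (n + 2 : ℕ) * a (n + 2) : ℝ) : ℂ) *
      z ^ ((μ * (n + 2 : ℕ) - 1 : ℝ) : ℂ) with hSdef
  have hSbound : ‖S‖ ≤ 2 * μ * ((A - B) * (1 - γ)) / X * r := by
    have h1 : ‖S‖ ≤ ∑' n : ℕ,
        ‖((μ * (n + 2 : ℕ) * a (n + 2) : ℝ) : ℂ) *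
          z ^ ((μ * (n + 2 : ℕ) - 1 : ℝ) : ℂ)‖ := by
      have h1' := norm_tsum_le_tsum_norm (f := fun n : ℕ =>
        ((μ * (n + 2 : ℕ) * a (n + 2) : ℝ) : ℂ) * z ^ ((μ * (n + 2 : ℕ) - 1 : ℝ) : ℂ))
        hsummable
      exact h1'
    have h2 : (∑' n : ℕ,
        ‖((μ * (n + 2 : ℕ) * a (n + 2) : ℝ) : ℂ) *
          z ^ ((μ * (n + 2 : ℕ) - 1 : ℝ) : ℂ)‖) ≤
        ∑' n : ℕ, 2 * μ / X * (Xi μ A B γ k m ϑ lam (n + 2) * a (n + 2)) * r :=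
      Summable.tsum_le_tsum key hsummable hsb
    have h3 : (∑' n : ℕ, 2 * μ / X * (Xi μ A B γ k m ϑ lam (n + 2) * a (n + 2)) * r)
        = 2 * μ / X * (∑' n : ℕ, Xi μ A B γ k m ϑ lam (n + 2) * a (n + 2)) * r := by
      rw [tsum_mul_right, tsum_mul_left]
    have h4 : 2 * μ / X * (∑' n : ℕ, Xi μ A B γ k m ϑ lam (n + 2) * a (n + 2)) * r ≤
        2 * μ * ((A - B) * (1 - γ)) / X * r := by
      have hc : (0:ℝ) ≤ 2 * μ / X := by positivity
      have : 2 * μ / X * (∑' n : ℕ, Xi μ A B γ k m ϑ lam (n + 2) * a (n + 2)) ≤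
          2 * μ / X * ((A - B) * (1 - γ)) := mul_le_mul_of_nonneg_left hle hc
      have heq : 2 * μ / X * ((A - B) * (1 - γ)) = 2 * μ * ((A - B) * (1 - γ)) / X := by
        ring
      calc 2 * μ / X * (∑' n : ℕ, Xi μ A B γ k m ϑ lam (n + 2) * a (n + 2)) * r
          ≤ 2 * μ / X * ((A - B) * (1 - γ)) * r := mul_le_mul_of_nonneg_right this hrnn
        _ = 2 * μ * ((A - B) * (1 - γ)) / X * r := by rw [heq]
    calc ‖S‖ ≤ _ := h1
      _ ≤ _ := h2
      _ = _ := h3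
      _ ≤ _ := h4
  have hFder : Fder μ a z = 1 - S := rfl
  constructor
  · have h5 : (1:ℝ) - ‖S‖ ≤ ‖1 - S‖ := by
      simpa using norm_sub_norm_le (1:ℂ) S
    rw [hFder]
    linarith
  · have h5 : ‖1 - S‖ ≤ 1 + ‖S‖ := by
      simpa using norm_sub_le (1:ℂ) S
    rw [hFder]
    linarith
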